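/- Each u_k = 2,3,5,1,7,4,...,2k+3,2k,2k+4,2k+5,2k+2 contains exactly two occurrences of the pattern 2341: one formed by its first four entries 2,3,5,1, and one formed by the first, second, third, and fifth entries from the right end. -/
import Mathlib


/-- `u` and `v` have the same length and are order isomorphic (same relative order of entries). -/
def OrderIsoList (u v : List ℕ) : Prop :=
  u.length = v.length ∧ ∀ i j, i < u.length → j < u.length →
    (u.getD i 0 < u.getD j 0 ↔ v.getD i 0 < v.getD j 0)

/-- `p` contains the pattern `q`: some subsequence of `p` is order isomorphic to `q`. -/
def ContainsPat (p q : List ℕ) : Prop := ∃ s : List ℕ, s.Sublist p ∧ OrderIsoList s q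

def AvoidsPat (p q : List ℕ) : Prop := ¬ ContainsPat p q

/-- `p` is a permutation of the values `1, …, p.length`. -/
def IsPermList (p : List ℕ) : Prop := p.Perm (List.range' 1 p.length)

/-- The antichain element `u_k = 2, 3, 5, 1, 7, 4, 9, 6, …, 2k+3, 2k, 2k+4, 2k+5, 2k+2`
(of length `2k + 5`, for `k ≥ 1`). -/
def uPerm (k : ℕ) : List ℕ :=
  [2, 3, 5, 1] ++ ((List.range' 2 (k - 1)).flatMap fun i => [2 * i + 3, 2 * i]) ++
    [2 * k + 4, 2 * k + 5, 2 * k + 2]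


lemma midLen (n s : ℕ) : ((List.range' s n).flatMap fun i => [2*i+3, 2*i]).length = 2*n := by
  induction n generalizing s with
  | zero => simp
  | succ n ih => rw [List.range'_succ]; simp [ih]; ring

lemma midGet (n s m : ℕ) (h : m < 2*n) :
    ((List.range' s n).flatMap fun i => [2*i+3, 2*i]).getD m 0 =
      if m % 2 = 0 then 2*(s + m/2)+3 else 2*(s + m/2) := by
  induction n generalizing s m with
  | zero => omega
  | succ n ih =>
    rw [List.range'_succ]
    match m with
    | 0 => simp
    | 1 => simp
    | (m+2) =>
      simp only [List.flatMap_cons, List.cons_append, List.getD_cons_succ]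
      simp only [List.nil_append]
      rw [ih (s+1) m (by omega)]
      have : (m+2) % 2 = m % 2 := by omega
      rw [this]
      have : (m+2)/2 = m/2 + 1 := by omega
      rw [this]
      split <;> ring

lemma uLen (k : ℕ) (hk : 1 ≤ k) : (uPerm k).length = 2*k+5 := by
  unfold uPerm
  rw [List.length_append, List.length_append, midLen]
  simp; omega

lemma uSpec (k : ℕ) (hk : 1 ≤ k) (p : ℕ) (hp : p < 2*k+5) :
    (p=0 ∧ (uPerm k).getD p 0 = 2) ∨ (p=1 ∧ (uPerm k).getD p 0 = 3) ∨
    (p=2 ∧ (uPerm k).getD p 0 = 5) ∨ (p=3 ∧ (uPerm k).getD p 0 = 1) ∨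
    (4 ≤ p ∧ p ≤ 2*k+1 ∧ p%2=0 ∧ (uPerm k).getD p 0 = p+3) ∨
    (4 ≤ p ∧ p ≤ 2*k+1 ∧ p%2=1 ∧ (uPerm k).getD p 0 + 1 = p) ∨
    (p=2*k+2 ∧ (uPerm k).getD p 0 = 2*k+4) ∨ (p=2*k+3 ∧ (uPerm k).getD p 0 = 2*k+5) ∨
    (p=2*k+4 ∧ (uPerm k).getD p 0 = 2*k+2) := by
  set B := (List.range' 2 (k - 1)).flatMap fun i => [2*i+3, 2*i] with hB
  have hBlen : B.length = 2*(k-1) := midLen _ _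
  have hABlen : (([2,3,5,1] : List ℕ) ++ B).length = 2*k+2 := by
    rw [List.length_append, hBlen]; simp; omega
  unfold uPerm
  rw [← hB]
  by_cases h4 : p < 4
  · rw [List.getD_append _ _ _ _ (by omega)]
    interval_cases p <;> simp
  · by_cases hm : p < 2*k+2
    · rw [List.getD_append _ _ _ _ (by omega),
        List.getD_append_right _ _ _ _ (by simp; omega)]
      have hlen4 : ([2,3,5,1] : List ℕ).length = 4 := rfl
      rw [hlen4, hB, midGet (k-1) 2 (p-4) (by omega)]
      have h2 : (p-4) % 2 = p % 2 := by omega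
      have h3 : 2 + (p-4)/2 = p/2 := by omega
      rw [h2, h3]
      rcases Nat.mod_two_eq_zero_or_one p with h0 | h0
      · rw [if_pos h0]
        exact .inr (.inr (.inr (.inr (.inl ⟨by omega, by omega, h0, by omega⟩))))
      · rw [if_neg (by omega)]
        exact .inr (.inr (.inr (.inr (.inr (.inl ⟨by omega, by omega, h0, by omega⟩)))))
    · rw [List.getD_append_right _ _ _ _ (by omega), hABlen]
      have hcase : p = 2*k+2 ∨ p = 2*k+3 ∨ p = 2*k+4 := by omega
      rcases hcase with h | h | h <;> subst h
      · rw [show 2*k+2 - (2*k+2) = 0 by omega]; simp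
      · rw [show 2*k+3 - (2*k+2) = 1 by omega]; simp
      · rw [show 2*k+4 - (2*k+2) = 2 by omega]; simp

theorem stmt18 (k : ℕ) (hk : 1 ≤ k) (i1 i2 i3 i4 : ℕ)
    (h12 : i1 < i2) (h23 : i2 < i3) (h34 : i3 < i4) (h4 : i4 < (uPerm k).length) :
    ((uPerm k).getD i4 0 < (uPerm k).getD i1 0 ∧
        (uPerm k).getD i1 0 < (uPerm k).getD i2 0 ∧
        (uPerm k).getD i2 0 < (uPerm k).getD i3 0) ↔
      ((i1, i2, i3, i4) = (0, 1, 2, 3) ∨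
        (i1, i2, i3, i4) = ((uPerm k).length - 5, (uPerm k).length - 3,
          (uPerm k).length - 2, (uPerm k).length - 1)) := by
  have hlen := uLen k hk
  rw [hlen] at h4
  have s1 := uSpec k hk i1 (by omega)
  have s2 := uSpec k hk i2 (by omega)
  have s3 := uSpec k hk i3 (by omega)
  have s4 := uSpec k hk i4 (by omega)
  rw [hlen]
  simp only [Prod.mk.injEq]
  omega
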